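/- For the focal surface of a Darboux-frame tubular surface with b = k_g cos v + k_n sin v ≠ 0 and N* = T: the u-parameter curves are asymptotic (⟨X*_uu, N*⟩ = 0) if and only if b_u - b_v τ_g = 0, which contradicts regularity of the focal surface; and the v-parameter curves are always asymptotic, since ⟨X*_vv, N*⟩ = 0, because X*_vv has no T-component. -/

import Mathlib

open Real RealInnerProductSpace

noncomputable def cross3 (x y : EuclideanSpace ℝ (Fin 3)) : EuclideanSpace ℝ (Fin 3) :=
  WithLp.toLp 2 ![x 1 * y 2 - x 2 * y 1,
    x 2 * y 0 - x 0 * y 2,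
    x 0 * y 1 - x 1 * y 0]

theorem stmt19
    (γ T Y U : ℝ → EuclideanSpace ℝ (Fin 3))
    (kg kn τg : ℝ → ℝ)
    (hγ : ∀ u, HasDerivAt γ (T u) u)
    (hT : ∀ u, HasDerivAt T (kg u • Y u + kn u • U u) u)
    (hY : ∀ u, HasDerivAt Y ((-kg u) • T u + τg u • U u) u)
    (hU : ∀ u, HasDerivAt U ((-kn u) • T u + (-τg u) • Y u) u)
    (hTT : ∀ u, ⟪T u, T u⟫ = 1)
    (hYY : ∀ u, ⟪Y u, Y u⟫ = 1)
    (hUU : ∀ u, ⟪U u, U u⟫ = 1)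
    (hTY : ∀ u, ⟪T u, Y u⟫ = 0)
    (hTU : ∀ u, ⟪T u, U u⟫ = 0)
    (hYU : ∀ u, ⟪Y u, U u⟫ = 0)
    (horient : ∀ u, cross3 (T u) (Y u) = U u)
    (kg' kn' : ℝ → ℝ)
    (hkg' : ∀ u, HasDerivAt kg (kg' u) u)
    (hkn' : ∀ u, HasDerivAt kn (kn' u) u)
    (Xs : ℝ → ℝ → EuclideanSpace ℝ (Fin 3))
    (hXs : ∀ u v, Xs u v =
      γ u + (kg u * cos v + kn u * sin v)⁻¹ • ((cos v) • Y u + (sin v) • U u))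
    (Xsu Xsv : ℝ → ℝ → EuclideanSpace ℝ (Fin 3))
    (hXsu : ∀ u v, HasDerivAt (fun u' => Xs u' v) (Xsu u v) u)
    (hXsv : ∀ u v, HasDerivAt (fun v' => Xs u v') (Xsv u v) v)
    (u v : ℝ) (Xsuu Xsuv Xsvv : EuclideanSpace ℝ (Fin 3))
    (hXsuu : HasDerivAt (fun u' => Xsu u' v) Xsuu u)
    (hXsuv : HasDerivAt (fun v' => Xsu u v') Xsuv v)
    (hXsvv : HasDerivAt (fun v' => Xsv u v') Xsvv v)
    (b bu bv : ℝ)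
    (hb : b = kg u * cos v + kn u * sin v)
    (hbu : bu = kg' u * cos v + kn' u * sin v)
    (hbv : bv = -kg u * sin v + kn u * cos v)
    (hb0 : b ≠ 0)
    (hreg : bu - bv * τg u ≠ 0) :
    (⟪Xsuu, T u⟫ = 0 ↔ bu - bv * τg u = 0) ∧
    ⟪Xsvv, T u⟫ = 0 := by
  -- symmetric orthonormality facts
  have hYT : ∀ s, ⟪Y s, T s⟫ = 0 := fun s => by rw [real_inner_comm]; exact hTY s
  have hUT : ∀ s, ⟪U s, T s⟫ = 0 := fun s => by rw [real_inner_comm]; exact hTU s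
  have hUY : ∀ s, ⟪U s, Y s⟫ = 0 := fun s => by rw [real_inner_comm]; exact hYU s
  -- Part 2: v-curves
  have hvv : ⟪Xsvv, T u⟫ = 0 := by
    have hconst : ∀ v', ⟪Xs u v', T u⟫ = ⟪γ u, T u⟫ := by
      intro v'
      simp [hXs, inner_add_left, inner_smul_left, hYT, hUT]
    have h1 : ∀ v', ⟪Xsv u v', T u⟫ = 0 := by
      intro v'
      have hd : HasDerivAt (fun v'' => ⟪Xs u v'', T u⟫)
          (⟪Xs u v', (0 : EuclideanSpace ℝ (Fin 3))⟫ + ⟪Xsv u v', T u⟫) v' :=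
        (hXsv u v').inner ℝ (hasDerivAt_const v' (T u))
      have hd0 : HasDerivAt (fun v'' => ⟪Xs u v'', T u⟫) 0 v' := by
        have : (fun v'' => ⟪Xs u v'', T u⟫) = fun _ => ⟪γ u, T u⟫ := funext hconst
        rw [this]; exact hasDerivAt_const _ _
      have := hd.unique hd0
      simpa using this
    have hd : HasDerivAt (fun v' => ⟪Xsv u v', T u⟫)
        (⟪Xsv u v, (0 : EuclideanSpace ℝ (Fin 3))⟫ + ⟪Xsvv, T u⟫) v :=
      hXsvv.inner ℝ (hasDerivAt_const v (T u))
    have hd0 : HasDerivAt (fun v' => ⟪Xsv u v', T u⟫) 0 v := by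
      have : (fun v' => ⟪Xsv u v', T u⟫) = fun _ => (0 : ℝ) := funext h1
      rw [this]; exact hasDerivAt_const _ _
    have := hd.unique hd0
    simpa using this
  -- Part 1: u-curves
  set β : ℝ → ℝ := fun s => kg s * cos v + kn s * sin v with hβdef
  have hβ : ∀ s, HasDerivAt β (kg' s * cos v + kn' s * sin v) s := fun s =>
    ((hkg' s).mul_const _).add ((hkn' s).mul_const _)
  have hβu : β u ≠ 0 := by rw [hβdef]; simpa [← hb] using hb0
  have hne : ∀ᶠ s in nhds u, β s ≠ 0 := (hβ u).continuousAt.eventually_ne hβu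
  -- explicit formula for Xsu where β s ≠ 0
  have hXsu_eq : ∀ s, β s ≠ 0 →
      Xsu s v = T s + (β s)⁻¹ •
          (cos v • ((-kg s) • T s + τg s • U s) + sin v • ((-kn s) • T s + (-τg s) • Y s))
        + (-(kg' s * cos v + kn' s * sin v) / (β s) ^ 2) • (cos v • Y s + sin v • U s) := by
    intro s hs
    have hW : HasDerivAt (fun t => cos v • Y t + sin v • U t)
        (cos v • ((-kg s) • T s + τg s • U s) + sin v • ((-kn s) • T s + (-τg s) • Y s)) s :=
      ((hY s).const_smul (cos v)).add ((hU s).const_smul (sin v))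
    have hinv : HasDerivAt (fun t => (β t)⁻¹) (-(kg' s * cos v + kn' s * sin v) / (β s) ^ 2) s :=
      (hβ s).inv hs
    have hprod := hinv.smul hW
    have hfull : HasDerivAt (fun t => Xs t v)
        (T s + ((β s)⁻¹ •
            (cos v • ((-kg s) • T s + τg s • U s) + sin v • ((-kn s) • T s + (-τg s) • Y s))
          + (-(kg' s * cos v + kn' s * sin v) / (β s) ^ 2) • (cos v • Y s + sin v • U s))) s := by
      have : (fun t => Xs t v) = fun t => γ t + (β t)⁻¹ • (cos v • Y t + sin v • U t) := by
        funext t; exact hXs t v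
      rw [this]
      exact (hγ s).add hprod
    have := (hXsu s v).unique hfull
    rw [this]; abel
  -- f s = ⟪Xsu s v, T s⟫ is eventually 0
  have hf0 : ∀ s, β s ≠ 0 → ⟪Xsu s v, T s⟫ = 0 := by
    intro s hs
    rw [hXsu_eq s hs]
    simp only [inner_add_left, inner_smul_left, conj_trivial, hTT, hTY, hTU, hYT, hUT, hYU, hUY]
    field_simp
    ring
  have hfe : (fun s => ⟪Xsu s v, T s⟫) =ᶠ[nhds u] fun _ => (0 : ℝ) :=
    hne.mono fun s hs => hf0 s hs
  have hfd : HasDerivAt (fun s => ⟪Xsu s v, T s⟫)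
      (⟪Xsu u v, kg u • Y u + kn u • U u⟫ + ⟪Xsuu, T u⟫) u :=
    hXsuu.inner ℝ (hT u)
  have hfd0 : HasDerivAt (fun s => ⟪Xsu s v, T s⟫) 0 u :=
    (hasDerivAt_const u (0 : ℝ)).congr_of_eventuallyEq hfe
  have hsum : ⟪Xsu u v, kg u • Y u + kn u • U u⟫ + ⟪Xsuu, T u⟫ = 0 := hfd.unique hfd0
  -- compute the first inner product
  have hinner : ⟪Xsu u v, kg u • Y u + kn u • U u⟫ = -((bu - bv * τg u) / b) := by
    have hb0' : kg u * cos v + kn u * sin v ≠ 0 := hb ▸ hb0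
    rw [hXsu_eq u hβu, hb, hbu, hbv]
    simp only [inner_add_left, inner_smul_left, inner_add_right, inner_smul_right, conj_trivial,
      hTT, hTY, hTU, hYT, hUT, hYU, hUY, hYY, hUU, hβdef]
    field_simp
    ring
  have hmain : ⟪Xsuu, T u⟫ = (bu - bv * τg u) / b := by linarith [hsum, hinner]
  refine ⟨?_, hvv⟩
  rw [hmain]
  constructor
  · intro h
    rcases div_eq_zero_iff.mp h with h' | h'
    · exact h'
    · exact absurd h' hb0
  · intro h; rw [h]; simp
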